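/- Let u, v ∈ (0,1) and ρ ∈ (−1,1), ρ ≠ 0. Then C(u,v;ρ) = ∫₀ᵘ Φ((Φ⁻¹(v) − ρ·Φ⁻¹(t))/√(1−ρ²)) dt. -/

import Mathlib

open MeasureTheory Real Set

/-- Standard normal density φ. -/
noncomputable def stdPdf (x : ℝ) : ℝ :=
  (1 / Real.sqrt (2 * Real.pi)) * Real.exp (-x ^ 2 / 2)

/-- Standard normal distribution function Φ. -/
noncomputable def stdCdf (h : ℝ) : ℝ := ∫ x in Set.Iio h, stdPdf x

/-- Inverse Φ⁻¹ of the standard normal distribution function (on (0,1)). -/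
noncomputable def stdQuantile : ℝ → ℝ := Function.invFun stdCdf

/-- Bivariate standard normal density φ₂ with correlation ρ. -/
noncomputable def binPdf (x y ρ : ℝ) : ℝ :=
  (1 / (2 * Real.pi * Real.sqrt (1 - ρ ^ 2))) *
    Real.exp (-(x ^ 2 - 2 * ρ * x * y + y ^ 2) / (2 * (1 - ρ ^ 2)))

/-- Bivariate standard normal distribution function Φ₂. -/
noncomputable def binCdf (h k ρ : ℝ) : ℝ :=
  ∫ x in Set.Iio h, ∫ y in Set.Iio k, binPdf x y ρ

/-- The bivariate normal copula C(u,v;ρ) = Φ₂(Φ⁻¹(u),Φ⁻¹(v);ρ). -/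
noncomputable def normCopula (u v ρ : ℝ) : ℝ :=
  binCdf (stdQuantile u) (stdQuantile v) ρ

/-- g(u;ρ) = Φ(√((1−ρ)/(1+ρ))·Φ⁻¹(u)). -/
noncomputable def gFun (u ρ : ℝ) : ℝ :=
  stdCdf (Real.sqrt ((1 - ρ) / (1 + ρ)) * stdQuantile u)
open Filter
lemma stdPdf_pos (x : ℝ) : 0 < stdPdf x := by
  have h2π : (0:ℝ) < Real.sqrt (2 * Real.pi) := Real.sqrt_pos.mpr (by positivity)
  unfold stdPdf
  positivity

lemma continuous_stdPdf : Continuous stdPdf := by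
  unfold stdPdf
  continuity

lemma integrable_stdPdf : Integrable stdPdf := by
  have h := (integrable_exp_neg_mul_sq (by norm_num : (0:ℝ) < 1/2)).const_mul
    (1 / Real.sqrt (2 * Real.pi))
  have he : stdPdf = fun x => (1 / Real.sqrt (2 * Real.pi)) * Real.exp (-(1/2) * x ^ 2) := by
    funext x
    unfold stdPdf
    rw [show -x ^ 2 / 2 = -(1/2) * x ^ 2 by ring]
  rw [he]; exact h

lemma stdCdf_eq_Iic (x : ℝ) : stdCdf x = ∫ t in Set.Iic x, stdPdf t :=
  (MeasureTheory.integral_Iic_eq_integral_Iio).symm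

lemma stdCdf_sub (a b : ℝ) : stdCdf b - stdCdf a = ∫ t in a..b, stdPdf t := by
  rw [stdCdf_eq_Iic, stdCdf_eq_Iic]
  exact intervalIntegral.integral_Iic_sub_Iic integrable_stdPdf.integrableOn
    integrable_stdPdf.integrableOn

lemma hasDerivAt_stdCdf (x : ℝ) : HasDerivAt stdCdf (stdPdf x) x := by
  have key : stdCdf = fun y => stdCdf 0 + ∫ t in (0:ℝ)..y, stdPdf t := by
    funext y
    have := stdCdf_sub 0 y
    linarith
  rw [key]
  exact (intervalIntegral.integral_hasDerivAt_right
    integrable_stdPdf.intervalIntegrable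
    (continuous_stdPdf.stronglyMeasurableAtFilter _ _)
    continuous_stdPdf.continuousAt).const_add _

lemma strictMono_stdCdf : StrictMono stdCdf := by
  intro a b hab
  have h := stdCdf_sub a b
  have hpos : 0 < ∫ t in a..b, stdPdf t :=
    intervalIntegral.intervalIntegral_pos_of_pos
      integrable_stdPdf.intervalIntegrable stdPdf_pos hab
  linarith

lemma continuous_stdCdf : Continuous stdCdf :=
  continuous_iff_continuousAt.mpr fun x => (hasDerivAt_stdCdf x).continuousAt

lemma integral_stdPdf : ∫ x, stdPdf x = 1 := by
  have h2π : (0:ℝ) < 2 * Real.pi := by positivity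
  have he : stdPdf = fun x => (1 / Real.sqrt (2 * Real.pi)) * Real.exp (-(1/2) * x ^ 2) := by
    funext x
    unfold stdPdf
    rw [show -x ^ 2 / 2 = -(1/2) * x ^ 2 by ring]
  rw [he, MeasureTheory.integral_const_mul, integral_gaussian,
    show Real.pi / (1/2 : ℝ) = 2 * Real.pi by ring]
  field_simp

lemma stdCdf_pos (x : ℝ) : 0 < stdCdf x := by
  unfold stdCdf
  rw [MeasureTheory.setIntegral_pos_iff_support_of_nonneg_ae
    (Filter.Eventually.of_forall fun y => (stdPdf_pos y).le)
    integrable_stdPdf.integrableOn]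
  have : Function.support stdPdf ∩ Set.Iio x = Set.Iio x := by
    rw [Set.inter_eq_right]
    intro y _
    exact (stdPdf_pos y).ne'
  rw [this]
  simp [Real.volume_Iio]

lemma stdCdf_lt_one (x : ℝ) : stdCdf x < 1 := by
  have hsplit : (∫ t in Set.Iic x, stdPdf t) + ∫ t in Set.Ioi x, stdPdf t = ∫ t, stdPdf t :=
    intervalIntegral.integral_Iic_add_Ioi integrable_stdPdf.integrableOn
      integrable_stdPdf.integrableOn
  have hpos : 0 < ∫ t in Set.Ioi x, stdPdf t := by
    rw [MeasureTheory.setIntegral_pos_iff_support_of_nonneg_ae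
      (Filter.Eventually.of_forall fun y => (stdPdf_pos y).le)
      integrable_stdPdf.integrableOn]
    have : Function.support stdPdf ∩ Set.Ioi x = Set.Ioi x := by
      rw [Set.inter_eq_right]; intro y _; exact (stdPdf_pos y).ne'
    rw [this]; simp [Real.volume_Ioi]
  rw [stdCdf_eq_Iic]
  rw [integral_stdPdf] at hsplit
  linarith

lemma tendsto_stdCdf_atBot : Tendsto stdCdf atBot (nhds 0) := by
  have hseq : Tendsto (fun n : ℕ => stdCdf (-(n:ℝ))) atTop (nhds 0) := by
    have hinter : ⋂ n : ℕ, Set.Iio (-(n:ℝ)) = ∅ := by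
      ext y
      simp only [Set.mem_iInter, Set.mem_Iio, Set.mem_empty_iff_false, iff_false, not_forall,
        not_lt]
      obtain ⟨n, hn⟩ := exists_nat_gt (-y)
      exact ⟨n, by linarith⟩
    have := MeasureTheory.tendsto_setIntegral_of_antitone
      (f := stdPdf) (μ := volume) (s := fun n : ℕ => Set.Iio (-(n:ℝ)))
      (fun n => measurableSet_Iio)
      (fun m n hmn => Set.Iio_subset_Iio (by exact_mod_cast neg_le_neg (Nat.cast_le.mpr hmn)))
      ⟨0, integrable_stdPdf.integrableOn⟩
    rw [hinter] at this
    simpa [stdCdf] using this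
  rw [tendsto_order]
  constructor
  · intro a ha
    exact Filter.Eventually.of_forall fun x => ha.trans (stdCdf_pos x)
  · intro a ha
    obtain ⟨N, hN⟩ := (Filter.tendsto_atTop'.mp hseq _ (Iio_mem_nhds ha)) |>.imp
      fun N h => h
    refine Filter.eventually_atBot.mpr ⟨-(N:ℝ), fun x hx => ?_⟩
    have h1 : stdCdf x ≤ stdCdf (-(N:ℝ)) := strictMono_stdCdf.monotone hx
    have h2 : stdCdf (-(N:ℝ)) < a := hN N le_rfl
    linarith

lemma tendsto_stdCdf_atTop : Tendsto stdCdf atTop (nhds 1) := by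
  have hseq : Tendsto (fun n : ℕ => stdCdf (n:ℝ)) atTop (nhds 1) := by
    have hunion : ⋃ n : ℕ, Set.Iio ((n:ℝ)) = Set.univ := by
      ext y
      simp only [Set.mem_iUnion, Set.mem_Iio, Set.mem_univ, iff_true]
      exact exists_nat_gt y
    have := MeasureTheory.tendsto_setIntegral_of_monotone
      (f := stdPdf) (μ := volume) (s := fun n : ℕ => Set.Iio ((n:ℝ)))
      (fun n => measurableSet_Iio)
      (fun m n hmn => Set.Iio_subset_Iio (Nat.cast_le.mpr hmn))
      (by rw [hunion]; exact integrable_stdPdf.integrableOn)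
    rw [hunion] at this
    simpa [integral_stdPdf, stdCdf] using this
  rw [tendsto_order]
  constructor
  · intro a ha
    obtain ⟨N, hN⟩ := Filter.tendsto_atTop'.mp hseq _ (Ioi_mem_nhds ha)
    refine Filter.eventually_atTop.mpr ⟨(N:ℝ), fun x hx => ?_⟩
    have h1 : stdCdf (N:ℝ) ≤ stdCdf x := strictMono_stdCdf.monotone hx
    have h2 : a < stdCdf (N:ℝ) := hN N le_rfl
    linarith
  · intro a ha
    exact Filter.Eventually.of_forall fun x => (stdCdf_lt_one x).trans ha

lemma exists_stdCdf_eq {w : ℝ} (hw : w ∈ Set.Ioo (0:ℝ) 1) : ∃ x, stdCdf x = w := by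
  obtain ⟨a, ha⟩ := (tendsto_stdCdf_atBot.eventually_lt_const hw.1).exists
  obtain ⟨b, hb⟩ := (tendsto_stdCdf_atTop.eventually_const_lt hw.2).exists
  have hab : a ≤ b := by
    by_contra hba
    exact absurd (strictMono_stdCdf (lt_of_not_ge hba)) (by linarith)
  obtain ⟨x, _, hx⟩ := intermediate_value_Icc hab continuous_stdCdf.continuousOn
    ⟨ha.le, hb.le⟩
  exact ⟨x, hx⟩

lemma stdCdf_stdQuantile {w : ℝ} (hw : w ∈ Set.Ioo (0:ℝ) 1) : stdCdf (stdQuantile w) = w :=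
  Function.invFun_eq (exists_stdCdf_eq hw)

lemma stdQuantile_stdCdf (x : ℝ) : stdQuantile (stdCdf x) = x :=
  Function.leftInverse_invFun strictMono_stdCdf.injective x

lemma image_stdCdf_Iio {u : ℝ} (hu : u ∈ Set.Ioo (0:ℝ) 1) :
    stdCdf '' Set.Iio (stdQuantile u) = Set.Ioo 0 u := by
  have hh : stdCdf (stdQuantile u) = u := stdCdf_stdQuantile hu
  ext w
  constructor
  · rintro ⟨x, hx, rfl⟩
    exact ⟨stdCdf_pos x, hh ▸ strictMono_stdCdf hx⟩
  · rintro ⟨hw0, hwu⟩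
    obtain ⟨x, hx⟩ := exists_stdCdf_eq ⟨hw0, hwu.trans hu.2⟩
    refine ⟨x, ?_, hx⟩
    by_contra hge
    have := strictMono_stdCdf.monotone (not_lt.mp hge)
    rw [hh, hx] at this
    linarith

lemma inner_integral_eq {ρ : ℝ} (h1 : 0 < 1 - ρ ^ 2) (x k : ℝ) :
    ∫ y in Set.Iio k, binPdf x y ρ
      = stdPdf x * stdCdf ((k - ρ * x) / Real.sqrt (1 - ρ ^ 2)) := by
  set s := Real.sqrt (1 - ρ ^ 2) with hs_def
  have hs : 0 < s := Real.sqrt_pos.mpr h1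
  have hs2 : s ^ 2 = 1 - ρ ^ 2 := Real.sq_sqrt h1.le
  set c := (k - ρ * x) / s with hc_def
  have himg : (fun z => s * z + ρ * x) '' Set.Iio c = Set.Iio k := by
    ext y
    simp only [Set.mem_image, Set.mem_Iio]
    constructor
    · rintro ⟨z, hz, rfl⟩
      rw [hc_def, lt_div_iff₀ hs] at hz
      nlinarith
    · intro hy
      refine ⟨(y - ρ * x) / s, ?_, by field_simp; ring⟩
      rw [hc_def, div_lt_div_iff₀ hs hs]
      nlinarith
  have hderiv : ∀ z ∈ Set.Iio c, HasDerivWithinAt (fun z => s * z + ρ * x) s (Set.Iio c) z := by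
    intro z _
    exact (((hasDerivAt_id z).const_mul s).add_const (ρ * x)).hasDerivWithinAt.congr_deriv
      (by simp)
  have hinj : Set.InjOn (fun z => s * z + ρ * x) (Set.Iio c) := by
    intro a _ b _ hab
    simp only at hab
    have : s * a = s * b := by linarith
    exact mul_left_cancel₀ hs.ne' this
  have hpt : ∀ z : ℝ, |s| • binPdf x (s * z + ρ * x) ρ = stdPdf x * stdPdf z := by
    intro z
    rw [smul_eq_mul, abs_of_pos hs]
    unfold binPdf stdPdf
    have num : x ^ 2 - 2 * ρ * x * (s * z + ρ * x) + (s * z + ρ * x) ^ 2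
        = (1 - ρ ^ 2) * (x ^ 2 + z ^ 2) := by
      linear_combination z ^ 2 * hs2
    rw [num, show -((1 - ρ ^ 2) * (x ^ 2 + z ^ 2)) / (2 * (1 - ρ ^ 2))
        = -x ^ 2 / 2 + -z ^ 2 / 2 from by field_simp; ring, Real.exp_add]
    have h2π : Real.sqrt (2 * Real.pi) * Real.sqrt (2 * Real.pi) = 2 * Real.pi :=
      Real.mul_self_sqrt (by positivity)
    have hsq : (0:ℝ) < Real.sqrt (2 * Real.pi) := Real.sqrt_pos.mpr (by positivity)
    rw [← hs_def]
    have hQ : Real.sqrt 2 * Real.sqrt Real.pi * (Real.sqrt 2 * Real.sqrt Real.pi)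
        = 2 * Real.pi := by
      rw [mul_mul_mul_comm, Real.mul_self_sqrt (by norm_num : (0:ℝ) ≤ 2),
        Real.mul_self_sqrt Real.pi_pos.le]
    field_simp
    linear_combination h2π
  calc ∫ y in Set.Iio k, binPdf x y ρ
      = ∫ z in Set.Iio c, |s| • binPdf x (s * z + ρ * x) ρ := by
        rw [← himg]
        exact MeasureTheory.integral_image_eq_integral_abs_deriv_smul measurableSet_Iio
          hderiv hinj _
    _ = ∫ z in Set.Iio c, stdPdf x * stdPdf z := by
        simp only [hpt]
    _ = stdPdf x * stdCdf c := by
        rw [MeasureTheory.integral_const_mul]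
        rfl

theorem copula_conditional_integral_rep (u v ρ : ℝ)
    (hu : u ∈ Set.Ioo (0 : ℝ) 1) (hv : v ∈ Set.Ioo (0 : ℝ) 1)
    (hρ : ρ ∈ Set.Ioo (-1 : ℝ) 1) (hρ0 : ρ ≠ 0) :
    normCopula u v ρ =
      ∫ t in (0 : ℝ)..u,
        stdCdf ((stdQuantile v - ρ * stdQuantile t) / Real.sqrt (1 - ρ ^ 2)) := by
  have h1 : (0:ℝ) < 1 - ρ ^ 2 := by nlinarith [hρ.1, hρ.2]
  set k := stdQuantile v with hk_def
  set h := stdQuantile u with hh_def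
  have hRHS : (∫ t in (0 : ℝ)..u,
        stdCdf ((k - ρ * stdQuantile t) / Real.sqrt (1 - ρ ^ 2)))
      = ∫ x in Set.Iio h, stdPdf x * stdCdf ((k - ρ * x) / Real.sqrt (1 - ρ ^ 2)) := by
    rw [intervalIntegral.integral_of_le hu.1.le, MeasureTheory.integral_Ioc_eq_integral_Ioo,
      ← image_stdCdf_Iio hu, ← hh_def,
      MeasureTheory.integral_image_eq_integral_abs_deriv_smul measurableSet_Iio
        (fun x _ => (hasDerivAt_stdCdf x).hasDerivWithinAt)
        (strictMono_stdCdf.injective.injOn)]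
    refine MeasureTheory.setIntegral_congr_fun measurableSet_Iio fun x _ => ?_
    rw [stdQuantile_stdCdf, smul_eq_mul, abs_of_pos (stdPdf_pos x)]
  rw [hRHS]
  unfold normCopula binCdf
  rw [← hh_def, ← hk_def]
  exact MeasureTheory.setIntegral_congr_fun measurableSet_Iio fun x _ =>
    inner_integral_eq h1 x k
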